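/- arXiv:1811.08322 — 2 statements merged into one kernel-verified Lean document; each statement's English description precedes it below -/
import Mathlib

section
/- Let 0 < α < 1 and integers 1 ≤ k ≤ n-3 (so n ≥ k+3). Then μ_α(K(n,k,n-k-1)) > μ_α(K(n,k,1)). -/
open Matrix BigOperators

/-- Spectral radius of a real square matrix: the largest modulus of its complex eigenvalues. -/
noncomputable def specRad {n : ℕ} (M : Matrix (Fin n) (Fin n) ℝ) : ℝ :=
  sSup {r : ℝ | ∃ μ ∈ spectrum ℂ (M.map (fun x => (x : ℂ))), r = ‖μ‖}

/-- A matrix is irreducible iff its associated digraph is strongly connected. -/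
def Irred {n : ℕ} (M : Matrix (Fin n) (Fin n) ℝ) : Prop :=
  ∀ i j : Fin n, Relation.ReflTransGen (fun a b => M a b ≠ 0) i j

/-- A directed walk of length `k` from `i` to `j` in a digraph. -/
def DWalk {n : ℕ} (G : Digraph (Fin n)) (i j : Fin n) (k : ℕ) : Prop :=
  ∃ f : ℕ → Fin n, f 0 = i ∧ f k = j ∧ ∀ l < k, G.Adj (f l) (f (l + 1))

/-- A digraph is strongly connected iff every vertex can reach every vertex. -/
def SConn {n : ℕ} (G : Digraph (Fin n)) : Prop :=
  ∀ i j : Fin n, ∃ k : ℕ, DWalk G i j k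

/-- A simple digraph has no loops. -/
def Loopless {n : ℕ} (G : Digraph (Fin n)) : Prop := ∀ i : Fin n, ¬ G.Adj i i

/-- Directed distance from `i` to `j`. -/
noncomputable def ddist {n : ℕ} (G : Digraph (Fin n)) (i j : Fin n) : ℕ :=
  sInf {k : ℕ | DWalk G i j k}

/-- Transmission of vertex `i`: sum of distances from `i` to all vertices. -/
noncomputable def transm {n : ℕ} (G : Digraph (Fin n)) (i : Fin n) : ℝ :=
  ∑ j : Fin n, (ddist G i j : ℝ)

/-- The generalized distance matrix `D_α(G) = α·Diag(Tr) + (1-α)·D(G)`. -/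
noncomputable def Dalpha {n : ℕ} (α : ℝ) (G : Digraph (Fin n)) : Matrix (Fin n) (Fin n) ℝ :=
  α • Matrix.diagonal (transm G) + (1 - α) • (Matrix.of fun i j => (ddist G i j : ℝ))

/-- The `D_α` spectral radius of a digraph. -/
noncomputable def mualpha {n : ℕ} (α : ℝ) (G : Digraph (Fin n)) : ℝ :=
  specRad (Dalpha α G)

/-- Isomorphism of digraphs on `Fin n`. -/
def IsoD {n : ℕ} (G H : Digraph (Fin n)) : Prop :=
  ∃ e : Fin n ≃ Fin n, ∀ i j : Fin n, G.Adj i j ↔ H.Adj (e i) (e j)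

/-- The digraph `K(n,k,m)`: vertices `0..k-1` form `K↔ₖ`, `k..k+m-1` form `K↔ₘ`,
`k+m..n-1` form `K↔_{n-k-m}`; all arcs present except those from `K↔_{n-k-m}` to `K↔ₘ`. -/
def KD (n k m : ℕ) : Digraph (Fin n) :=
  ⟨fun i j => i ≠ j ∧ ¬(k + m ≤ (i : ℕ) ∧ k ≤ (j : ℕ) ∧ (j : ℕ) < k + m)⟩

/-- A directed walk staying inside a vertex set `A`. -/
def DWalkIn {n : ℕ} (G : Digraph (Fin n)) (A : Set (Fin n)) (i j : Fin n) (k : ℕ) : Prop :=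
  ∃ f : ℕ → Fin n, f 0 = i ∧ f k = j ∧ (∀ l ≤ k, f l ∈ A) ∧ ∀ l < k, G.Adj (f l) (f (l + 1))

/-- The induced subdigraph on `A` is strongly connected. -/
def SCOn {n : ℕ} (G : Digraph (Fin n)) (A : Set (Fin n)) : Prop :=
  ∀ i ∈ A, ∀ j ∈ A, ∃ k : ℕ, DWalkIn G A i j k


lemma abs_spec_le {N : ℕ} (M : Matrix (Fin N) (Fin N) ℝ)
    (hM : ∀ i j, 0 ≤ M i j) (x : Fin N → ℝ) (hx : ∀ i, 0 < x i) (r : ℝ)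
    (h : ∀ i, M.mulVec x i ≤ r * x i) :
    ∀ s ∈ {s : ℝ | ∃ μ ∈ spectrum ℂ (M.map (fun x => (x : ℂ))), s = ‖μ‖}, s ≤ r := by
  rintro s ⟨μ, hμ, rfl⟩
  rw [spectrum.mem_iff] at hμ
  rw [Matrix.isUnit_iff_isUnit_det, isUnit_iff_ne_zero, Ne, not_not,
    ← Matrix.exists_mulVec_eq_zero_iff] at hμ
  obtain ⟨v, hv0, hv⟩ := hμ
  have hev : ∀ i, μ * v i = ∑ j, (M i j : ℂ) * v j := by
    intro i
    have h0 : (algebraMap ℂ (Matrix (Fin N) (Fin N) ℂ) μ).mulVec v i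
        - ((M.map (fun x => (x:ℂ))).mulVec v) i = 0 := by
      have := congrFun hv i; rwa [Matrix.sub_mulVec] at this
    have h1 : (algebraMap ℂ (Matrix (Fin N) (Fin N) ℂ) μ).mulVec v i = μ * v i := by
      simp [Matrix.algebraMap_matrix_apply, Matrix.mulVec, dotProduct,
        ite_mul, Finset.sum_ite_eq]
    have h2 : ((M.map (fun x => (x:ℂ))).mulVec v) i = ∑ j, (M i j : ℂ) * v j := by
      simp [Matrix.mulVec, dotProduct, Matrix.map_apply]
    rw [h1, h2] at h0
    exact sub_eq_zero.mp h0
  -- pick index maximizing |v j| / x j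
  have hne : (Finset.univ : Finset (Fin N)).Nonempty := by
    obtain ⟨j, hj⟩ := Function.ne_iff.mp hv0
    exact ⟨j, Finset.mem_univ j⟩
  obtain ⟨i, -, hi⟩ := Finset.exists_max_image Finset.univ
    (fun j => ‖v j‖ / x j) hne
  have hvi : 0 < ‖v i‖ := by
    obtain ⟨j, hj⟩ := Function.ne_iff.mp hv0
    have hj' : 0 < ‖v j‖ / x j :=
      div_pos (by simpa using hj) (hx j)
    have := hi j (Finset.mem_univ j)
    have : 0 < ‖v i‖ / x i := lt_of_lt_of_le hj' this
    rcases div_pos_iff.mp this with ⟨h1, _⟩ | ⟨_, h2⟩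
    · exact h1
    · exact absurd (hx i) (not_lt.mpr h2.le)
  -- main estimate
  have key : ‖μ‖ * ‖v i‖ ≤ r * ‖v i‖ := by
    have hstep : ‖μ‖ * ‖v i‖ = ‖∑ j, (M i j : ℂ) * v j‖ := by
      rw [← norm_mul]; rw [hev i]
    rw [hstep]
    calc ‖∑ j, (M i j : ℂ) * v j‖
        ≤ ∑ j, ‖(M i j : ℂ) * v j‖ := by
          exact norm_sum_le _ _
      _ = ∑ j, M i j * ‖v j‖ := by
          refine Finset.sum_congr rfl fun j _ => ?_
          rw [norm_mul, Complex.norm_of_nonneg (hM i j)]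
      _ ≤ ∑ j, M i j * ((‖v i‖ / x i) * x j) := by
          refine Finset.sum_le_sum fun j _ => ?_
          refine mul_le_mul_of_nonneg_left ?_ (hM i j)
          have := hi j (Finset.mem_univ j)
          calc ‖v j‖ = (‖v j‖ / x j) * x j := by
                rw [div_mul_cancel₀ _ (hx j).ne']
            _ ≤ (‖v i‖ / x i) * x j :=
                mul_le_mul_of_nonneg_right this (hx j).le
      _ = (‖v i‖ / x i) * (M.mulVec x i) := by
          rw [Matrix.mulVec, dotProduct, Finset.mul_sum]
          refine Finset.sum_congr rfl fun j _ => by ring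
      _ ≤ (‖v i‖ / x i) * (r * x i) := by
          refine mul_le_mul_of_nonneg_left (h i) (div_nonneg hvi.le (hx i).le)
      _ = r * ‖v i‖ := by
          field_simp
          exact mul_div_cancel_left₀ r (hx i).ne'
  exact le_of_mul_le_mul_right key hvi

lemma eigen_mem_spec {N : ℕ} (M : Matrix (Fin N) (Fin N) ℝ) (x : Fin N → ℝ) (hx0 : x ≠ 0)
    (r : ℝ) (hMx : M.mulVec x = r • x) :
    (r : ℂ) ∈ spectrum ℂ (M.map (fun x => (x : ℂ))) := by
  rw [spectrum.mem_iff, Matrix.isUnit_iff_isUnit_det, isUnit_iff_ne_zero, Ne, not_not,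
    ← Matrix.exists_mulVec_eq_zero_iff]
  refine ⟨fun i => (x i : ℂ), ?_, ?_⟩
  · intro hz
    apply hx0
    funext i
    have := congrFun hz i
    simpa using this
  · funext i
    rw [Matrix.sub_mulVec]
    have h1 : (algebraMap ℂ (Matrix (Fin N) (Fin N) ℂ) (r:ℂ)).mulVec (fun i => (x i : ℂ)) i
        = (r : ℂ) * (x i : ℂ) := by
      simp [Matrix.algebraMap_matrix_apply, Matrix.mulVec, dotProduct,
        ite_mul, Finset.sum_ite_eq]
    have h2 : ((M.map (fun y => (y:ℂ))).mulVec (fun i => (x i : ℂ))) i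
        = ((M.mulVec x i : ℝ) : ℂ) := by
      simp [Matrix.mulVec, dotProduct, Matrix.map_apply]
    have h3 : M.mulVec x i = r * x i := by rw [hMx]; rfl
    simp only [Pi.sub_apply, h1, h2, h3, Pi.zero_apply]
    push_cast
    ring

lemma dwalk_zero {n : ℕ} {G : Digraph (Fin n)} {i j : Fin n} : DWalk G i j 0 ↔ i = j := by
  constructor
  · rintro ⟨f, h0, hk, -⟩; rw [← h0, hk]
  · rintro rfl; exact ⟨fun _ => i, rfl, rfl, fun l hl => absurd hl (Nat.not_lt_zero l)⟩

lemma dwalk_one {n : ℕ} {G : Digraph (Fin n)} {i j : Fin n} : DWalk G i j 1 ↔ G.Adj i j := by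
  constructor
  · rintro ⟨f, h0, hk, hadj⟩
    have := hadj 0 one_pos
    rwa [h0, hk] at this
  · intro h
    refine ⟨fun l => if l = 0 then i else j, by simp, by simp, fun l hl => ?_⟩
    interval_cases l
    simpa using h

lemma ddist_self {n : ℕ} (G : Digraph (Fin n)) (i : Fin n) : ddist G i i = 0 :=
  Nat.sInf_eq_zero.mpr (Or.inl (dwalk_zero.mpr rfl))

lemma ddist_eq_one {n : ℕ} {G : Digraph (Fin n)} {i j : Fin n} (hij : i ≠ j)
    (h : G.Adj i j) : ddist G i j = 1 := by
  have h1 : 1 ∈ {k : ℕ | DWalk G i j k} := dwalk_one.mpr h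
  refine le_antisymm (Nat.sInf_le h1) ?_
  rw [ddist, Nat.one_le_iff_ne_zero]
  intro h0
  have := Nat.sInf_mem (Set.nonempty_of_mem h1)
  rw [h0] at this
  exact hij (dwalk_zero.mp this)

lemma ddist_eq_two {n : ℕ} {G : Digraph (Fin n)} {i j : Fin n} (hij : i ≠ j)
    (hna : ¬ G.Adj i j) (w : DWalk G i j 2) : ddist G i j = 2 := by
  have hw : (2 : ℕ) ∈ {k : ℕ | DWalk G i j k} := w
  refine le_antisymm (Nat.sInf_le hw) ?_
  have hmem := Nat.sInf_mem (Set.nonempty_of_mem hw)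
  rw [ddist]
  by_contra hlt
  push_neg at hlt
  set d := sInf {k : ℕ | DWalk G i j k} with hd
  interval_cases d
  · exact hij (dwalk_zero.mp hmem)
  · exact hna (dwalk_one.mp hmem)

lemma ddist_KD1 {n k : ℕ} (hk : 1 ≤ k) (hkn : k + 3 ≤ n) (i j : Fin n) :
    ddist (KD n k 1) i j =
      if j = i then 0 else if (k + 1 ≤ (i : ℕ) ∧ (j : ℕ) = k) then 2 else 1 := by
  split_ifs with h1 h2
  · rw [h1]; exact ddist_self _ _
  · -- distance two : i ≥ k+1, j = k, not adjacent
    have hij : i ≠ j := fun h => h1 (h.symm)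
    have hna : ¬ (KD n k 1).Adj i j := by
      rintro ⟨-, hno⟩
      exact hno ⟨by omega, by omega, by omega⟩
    have hz : (0 : ℕ) < n := by omega
    set z : Fin n := ⟨0, hz⟩ with hzdef
    have hA1 : (KD n k 1).Adj i z := by
      constructor
      · intro hc
        have : (i : ℕ) = (z : ℕ) := by rw [hc]
        simp [hzdef] at this
        omega
      · rintro ⟨-, hb, -⟩
        simp [hzdef] at hb
        omega
    have hA2 : (KD n k 1).Adj z j := by
      constructor
      · intro hc
        have : (z : ℕ) = (j : ℕ) := by rw [hc]
        simp [hzdef] at this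
        omega
      · rintro ⟨ha, -, -⟩
        simp [hzdef] at ha

    refine ddist_eq_two hij hna ?_
    refine ⟨fun l => if l = 0 then i else if l = 1 then z else j, by norm_num, by norm_num, ?_⟩
    intro l hl
    interval_cases l
    · norm_num
      exact hA1
    · norm_num
      exact hA2
  · -- adjacent
    have hij : i ≠ j := fun h => h1 (h.symm)
    refine ddist_eq_one hij ⟨hij, ?_⟩
    rintro ⟨ha, hb, hc⟩
    exact h2 ⟨ha, by omega⟩

lemma ddist_KD2 {n k : ℕ} (hk : 1 ≤ k) (hkn : k + 3 ≤ n) (i j : Fin n) :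
    ddist (KD n k (n - k - 1)) i j =
      if j = i then 0
      else if ((i : ℕ) = n - 1 ∧ k ≤ (j : ℕ) ∧ (j : ℕ) < n - 1) then 2 else 1 := by
  have hi' := i.isLt
  have hj' := j.isLt
  split_ifs with h1 h2
  · rw [h1]; exact ddist_self _ _
  · have hij : i ≠ j := fun h => h1 (h.symm)
    have hna : ¬ (KD n k (n - k - 1)).Adj i j := by
      rintro ⟨-, hno⟩
      exact hno ⟨by omega, by omega, by omega⟩
    have hz : (0 : ℕ) < n := by omega
    set z : Fin n := ⟨0, hz⟩ with hzdef
    have hA1 : (KD n k (n - k - 1)).Adj i z := by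
      constructor
      · intro hc
        have : (i : ℕ) = (z : ℕ) := by rw [hc]
        simp [hzdef] at this
        omega
      · rintro ⟨-, hb, -⟩
        simp [hzdef] at hb
        omega
    have hA2 : (KD n k (n - k - 1)).Adj z j := by
      constructor
      · intro hc
        have : (z : ℕ) = (j : ℕ) := by rw [hc]
        simp [hzdef] at this
        omega
      · rintro ⟨ha, -, -⟩
        simp [hzdef] at ha
        omega
    refine ddist_eq_two hij hna ?_
    refine ⟨fun l => if l = 0 then i else if l = 1 then z else j, by norm_num, by norm_num, ?_⟩
    intro l hl
    interval_cases l
    · norm_num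
      exact hA1
    · norm_num
      exact hA2
  · have hij : i ≠ j := fun h => h1 (h.symm)
    refine ddist_eq_one hij ⟨hij, ?_⟩
    rintro ⟨ha, hb, hc⟩
    exact h2 ⟨by omega, by omega, by omega⟩



lemma lroot (T D : ℝ) (hD : 0 < T^2 - 4*D) :
    ∃ ρ : ℝ, ρ^2 - T*ρ + D = 0 ∧ ∀ y : ℝ, y^2 - T*y + D < 0 → y < ρ := by
  have hs := Real.sq_sqrt hD.le
  have hspos : 0 < Real.sqrt (T^2 - 4*D) := Real.sqrt_pos.mpr hD
  refine ⟨(T + Real.sqrt (T^2-4*D))/2, by nlinarith [hs], ?_⟩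
  intro y hy
  nlinarith [hs, hspos, sq_nonneg (Real.sqrt (T^2-4*D) + (2*y - T))]

lemma quad_facts (a rn rk : ℝ) (h0 : 0 < a) (h1 : a < 1) (hk : 1 ≤ rk) (hkn : rk + 3 ≤ rn) :
    ∃ ρ1 ρ2 : ℝ,
      ρ1^2 - ((a*(rn-1)+(1-a)*rk) + (a*rn+(1-a)*(rn-rk-2)))*ρ1
        + ((a*(rn-1)+(1-a)*rk)*(a*rn+(1-a)*(rn-rk-2))
            - ((1-a)*(rn-rk-1))*((1-a)*(rk+2))) = 0 ∧
      ρ2^2 - ((a*(rn-1)+(1-a)*(rn-2)) + (a*(2*rn-rk-2)))*ρ2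
        + ((a*(rn-1)+(1-a)*(rn-2))*(a*(2*rn-rk-2))
            - (1-a)*((1-a)*(2*rn-rk-2))) = 0 ∧
      (a*(rn-1)+(1-a)*rk) < ρ1 ∧ (a*(rn-1)+(1-a)*(rn-2)) < ρ2 ∧
      rn - 1 < ρ1 ∧ ρ1 < ρ2 := by
  have ha : 0 < 1 - a := by linarith
  have hq12 : 0 < (1-a)*(rn-rk-1) := by nlinarith
  have hq21 : 0 < (1-a)*(rk+2) := by nlinarith
  have hD1 : 0 < ((a*(rn-1)+(1-a)*rk) + (a*rn+(1-a)*(rn-rk-2)))^2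
      - 4*((a*(rn-1)+(1-a)*rk)*(a*rn+(1-a)*(rn-rk-2))
            - ((1-a)*(rn-rk-1))*((1-a)*(rk+2))) := by
    nlinarith [sq_nonneg ((a*(rn-1)+(1-a)*rk) - (a*rn+(1-a)*(rn-rk-2))), mul_pos hq12 hq21]
  have hp21 : 0 < (1-a)*(2*rn-rk-2) := by nlinarith
  have hD2 : 0 < ((a*(rn-1)+(1-a)*(rn-2)) + (a*(2*rn-rk-2)))^2
      - 4*((a*(rn-1)+(1-a)*(rn-2))*(a*(2*rn-rk-2))
            - (1-a)*((1-a)*(2*rn-rk-2))) := by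
    nlinarith [sq_nonneg ((a*(rn-1)+(1-a)*(rn-2)) - (a*(2*rn-rk-2))), mul_pos ha hp21]
  obtain ⟨ρ1, hq1, hmax1⟩ := lroot _ _ hD1
  obtain ⟨ρ2, hq2, hmax2⟩ := lroot _ _ hD2
  have hρ1q11 : (a*(rn-1)+(1-a)*rk) < ρ1 := by
    apply hmax1
    have : (a*(rn-1)+(1-a)*rk)^2
        - ((a*(rn-1)+(1-a)*rk) + (a*rn+(1-a)*(rn-rk-2)))*(a*(rn-1)+(1-a)*rk)
        + ((a*(rn-1)+(1-a)*rk)*(a*rn+(1-a)*(rn-rk-2))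
            - ((1-a)*(rn-rk-1))*((1-a)*(rk+2)))
        = -(((1-a)*(rn-rk-1))*((1-a)*(rk+2))) := by ring
    rw [this]
    nlinarith [mul_pos hq12 hq21]
  have hρ1n : rn - 1 < ρ1 := by
    apply hmax1
    have : (rn-1)^2
        - ((a*(rn-1)+(1-a)*rk) + (a*rn+(1-a)*(rn-rk-2)))*(rn-1)
        + ((a*(rn-1)+(1-a)*rk)*(a*rn+(1-a)*(rn-rk-2))
            - ((1-a)*(rn-rk-1))*((1-a)*(rk+2)))
        = -((1-a)*(rn-rk-1)) := by ring
    rw [this]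
    linarith
  have hρ2p11 : (a*(rn-1)+(1-a)*(rn-2)) < ρ2 := by
    apply hmax2
    have : (a*(rn-1)+(1-a)*(rn-2))^2
        - ((a*(rn-1)+(1-a)*(rn-2)) + (a*(2*rn-rk-2)))*(a*(rn-1)+(1-a)*(rn-2))
        + ((a*(rn-1)+(1-a)*(rn-2))*(a*(2*rn-rk-2))
            - (1-a)*((1-a)*(2*rn-rk-2)))
        = -((1-a)*((1-a)*(2*rn-rk-2))) := by ring
    rw [this]
    nlinarith [mul_pos ha hp21]
  refine ⟨ρ1, ρ2, hq1, hq2, hρ1q11, hρ2p11, hρ1n, ?_⟩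
  apply hmax2
  have : ρ1^2
      - ((a*(rn-1)+(1-a)*(rn-2)) + (a*(2*rn-rk-2)))*ρ1
      + ((a*(rn-1)+(1-a)*(rn-2))*(a*(2*rn-rk-2))
            - (1-a)*((1-a)*(2*rn-rk-2)))
      = a*(rn-rk-2)*((rn-1) - ρ1) := by linear_combination hq1
  rw [this]
  have h2 : 0 < rn - rk - 2 := by linarith
  have h3 : 0 < ρ1 - (rn - 1) := by linarith
  nlinarith [mul_pos (mul_pos h0 h2) h3]


-- ===== auxiliary lemmas for stmt14 =====

lemma dalpha_mulVec {N : ℕ} (α : ℝ) (G : Digraph (Fin N)) (x : Fin N → ℝ) (i : Fin N) :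
    (Dalpha α G).mulVec x i
      = α * transm G i * x i + (1 - α) * ∑ j, (ddist G i j : ℝ) * x j := by
  rw [Dalpha, Matrix.add_mulVec, Matrix.smul_mulVec, Matrix.smul_mulVec]
  simp only [Pi.add_apply, Pi.smul_apply, smul_eq_mul]
  congr 1
  rw [Matrix.mulVec_diagonal]; ring

lemma transm_nonneg {N : ℕ} (G : Digraph (Fin N)) (i : Fin N) : 0 ≤ transm G i :=
  Finset.sum_nonneg fun j _ => Nat.cast_nonneg _

lemma dalpha_nonneg {N : ℕ} {α : ℝ} (h0 : 0 ≤ α) (h1 : α ≤ 1) (G : Digraph (Fin N))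
    (i j : Fin N) : 0 ≤ Dalpha α G i j := by
  rw [Dalpha]
  simp only [Matrix.add_apply, Pi.smul_apply, Matrix.smul_apply, Matrix.of_apply,
    smul_eq_mul, Matrix.diagonal_apply]
  have h2 : (0:ℝ) ≤ 1 - α := by linarith
  split_ifs
  · have := transm_nonneg G i
    positivity
  · simp only [mul_zero, zero_add]
    positivity

lemma sum_split {n kk : ℕ} (h : kk ≤ n) (A t : ℝ) :
    ∑ j : Fin n, (if (j : ℕ) < kk then A else t) = (kk : ℝ) * A + ((n - kk : ℕ) : ℝ) * t := by
  rw [Fin.sum_univ_eq_sum_range (fun m => if m < kk then A else t) n]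
  rw [← Finset.sum_filter_add_sum_filter_not (Finset.range n) (fun m => m < kk)]
  have e1 : (Finset.range n).filter (fun m => m < kk) = Finset.range kk := by
    ext m; simp [Finset.mem_range]; omega
  have e2 : (Finset.range n).filter (fun m => ¬ m < kk) = Finset.Ico kk n := by
    ext m; simp [Finset.mem_range, Finset.mem_Ico]; omega
  rw [e1, e2]
  rw [Finset.sum_congr rfl (fun m hm => if_pos (Finset.mem_range.mp hm)),
      Finset.sum_congr rfl (fun m hm => if_neg (by have := (Finset.mem_Ico.mp hm).1; omega))]
  simp [Finset.sum_const, Nat.card_Ico]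

lemma sum_ind {n k1 k2 : ℕ} (c : ℝ) :
    ∑ j : Fin n, (if k1 ≤ (j : ℕ) ∧ (j : ℕ) < k2 then c else 0)
      = ((min k2 n - k1 : ℕ) : ℝ) * c := by
  rw [Fin.sum_univ_eq_sum_range (fun m => if k1 ≤ m ∧ m < k2 then c else 0) n]
  rw [Finset.sum_ite, Finset.sum_const, Finset.sum_const, smul_zero, add_zero]
  have e1 : (Finset.range n).filter (fun m => k1 ≤ m ∧ m < k2) = Finset.Ico k1 (min k2 n) := by
    ext m; simp [Finset.mem_range, Finset.mem_Ico]; omega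
  rw [e1, Nat.card_Ico]
  simp [nsmul_eq_mul]

theorem stmt14 {n k : ℕ} (hk : 1 ≤ k) (hkn : k + 3 ≤ n)
    (α : ℝ) (h0 : 0 < α) (h1 : α < 1) :
    mualpha α (KD n k 1) < mualpha α (KD n k (n - k - 1)) := by
  have hkr : (1:ℝ) ≤ (k:ℝ) := by exact_mod_cast hk
  have hknr : (k:ℝ) + 3 ≤ (n:ℝ) := by exact_mod_cast hkn
  obtain ⟨ρ1, ρ2, hq1, hq2, hρ1q11, hρ2p11, hρ1n, hρ12⟩ :=
    quad_facts α (n:ℝ) (k:ℝ) h0 h1 hkr hknr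
  have hρ1pos : (0:ℝ) < ρ1 := by linarith
  have hρ2pos : (0:ℝ) < ρ2 := by nlinarith
  have ht1pos : (0:ℝ) < ρ1 - (α*((n:ℝ)-1)+(1-α)*(k:ℝ)) := by linarith
  have ht2pos : (0:ℝ) < ρ2 - (α*((n:ℝ)-1)+(1-α)*((n:ℝ)-2)) := by linarith
  have hA1pos : (0:ℝ) < ((1-α)*((n:ℝ)-(k:ℝ)-1)) := by nlinarith
  have hA2pos : (0:ℝ) < 1 - α := by linarith
  set x1 : Fin n → ℝ := fun j => if (j:ℕ) < k + 1 then ((1-α)*((n:ℝ)-(k:ℝ)-1)) else ρ1 - (α*((n:ℝ)-1)+(1-α)*(k:ℝ)) with hx1def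
  set x2 : Fin n → ℝ := fun j => if (j:ℕ) < n - 1 then (1 - α) else ρ2 - (α*((n:ℝ)-1)+(1-α)*((n:ℝ)-2)) with hx2def
  have hx1pos : ∀ i, 0 < x1 i := fun i => by
    rw [hx1def]; dsimp only; split_ifs <;> assumption
  have hx2pos : ∀ i, 0 < x2 i := fun i => by
    rw [hx2def]; dsimp only; split_ifs <;> assumption
  have kfmem : k < n := by omega
  set kf : Fin n := ⟨k, kfmem⟩ with hkf
  have hsum1 : ∀ (w : Fin n → ℝ) (i : Fin n),
      ∑ j, (ddist (KD n k 1) i j : ℝ) * w j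
        = (∑ j, w j) - w i + (if k + 1 ≤ (i:ℕ) then w kf else 0) := by
    intro w i
    have hpt : ∀ j, (ddist (KD n k 1) i j : ℝ) * w j
        = w j - (if j = i then w j else 0)
          + (if k + 1 ≤ (i:ℕ) then (if j = kf then w j else 0) else 0) := by
      intro j
      rw [ddist_KD1 hk hkn i j]
      by_cases hj : j = i
      · rw [if_pos hj, if_pos hj]
        by_cases h2 : k + 1 ≤ (i:ℕ)
        · have hne : j ≠ kf := by
            intro hc
            have h4 : (j:ℕ) = k := by rw [hc]
            have h5 : (j:ℕ) = (i:ℕ) := by rw [hj]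
            omega
          rw [if_pos h2, if_neg hne]
          simp
        · rw [if_neg h2]
          simp
      · rw [if_neg hj, if_neg hj]
        by_cases h2 : k + 1 ≤ (i:ℕ)
        · by_cases h3 : j = kf
          · have hjk : (j:ℕ) = k := by rw [h3]
            rw [if_pos ⟨h2, hjk⟩, if_pos h2, if_pos h3]
            push_cast; ring
          · have hjk : ¬ ((j:ℕ) = k) := fun hc => h3 (Fin.ext hc)
            rw [if_neg (fun hc => hjk hc.2), if_pos h2, if_neg h3]
            push_cast; ring
        · rw [if_neg (fun hc => h2 hc.1), if_neg h2]
          push_cast; ring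
    have e1 : ∑ j : Fin n, (if j = i then w j else 0) = w i := by simp
    have e2 : ∑ j : Fin n, (if k + 1 ≤ (i:ℕ) then (if j = kf then w j else 0) else 0)
        = (if k + 1 ≤ (i:ℕ) then w kf else 0) := by
      split_ifs with hc <;> simp
    rw [Finset.sum_congr rfl (fun j _ => hpt j), Finset.sum_add_distrib,
      Finset.sum_sub_distrib, e1, e2]
  have hsum2 : ∀ (w : Fin n → ℝ) (i : Fin n),
      ∑ j, (ddist (KD n k (n - k - 1)) i j : ℝ) * w j
        = (∑ j, w j) - w i
          + (if (i:ℕ) = n - 1 then (∑ j : Fin n, if k ≤ (j:ℕ) ∧ (j:ℕ) < n - 1 then w j else 0)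
              else 0) := by
    intro w i
    have hpt : ∀ j, (ddist (KD n k (n - k - 1)) i j : ℝ) * w j
        = w j - (if j = i then w j else 0)
          + (if (i:ℕ) = n - 1 then (if k ≤ (j:ℕ) ∧ (j:ℕ) < n - 1 then w j else 0) else 0) := by
      intro j
      rw [ddist_KD2 hk hkn i j]
      by_cases hj : j = i
      · rw [if_pos hj, if_pos hj]
        by_cases h2 : (i:ℕ) = n - 1
        · have hne : ¬ (k ≤ (j:ℕ) ∧ (j:ℕ) < n - 1) := by
            have h5 : (j:ℕ) = (i:ℕ) := by rw [hj]
            omega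
          rw [if_pos h2, if_neg hne]
          simp
        · rw [if_neg h2]
          simp
      · rw [if_neg hj, if_neg hj]
        by_cases h2 : (i:ℕ) = n - 1
        · by_cases h3 : k ≤ (j:ℕ) ∧ (j:ℕ) < n - 1
          · rw [if_pos ⟨h2, h3.1, h3.2⟩, if_pos h2, if_pos h3]
            push_cast; ring
          · rw [if_neg (fun hc => h3 ⟨hc.2.1, hc.2.2⟩), if_pos h2, if_neg h3]
            push_cast; ring
        · rw [if_neg (fun hc => h2 hc.1), if_neg h2]
          push_cast; ring
    have e1 : ∑ j : Fin n, (if j = i then w j else 0) = w i := by simp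
    have e2 : ∑ j : Fin n, (if (i:ℕ) = n - 1 then (if k ≤ (j:ℕ) ∧ (j:ℕ) < n - 1 then w j else 0) else 0)
        = (if (i:ℕ) = n - 1 then (∑ j : Fin n, if k ≤ (j:ℕ) ∧ (j:ℕ) < n - 1 then w j else 0) else 0) := by
      split_ifs with hc <;> simp
    rw [Finset.sum_congr rfl (fun j _ => hpt j), Finset.sum_add_distrib,
      Finset.sum_sub_distrib, e1, e2]
  have hones : ∑ _j : Fin n, (1:ℝ) = (n:ℝ) := by
    simp [Finset.sum_const, Finset.card_univ]
  have htr1 : ∀ i : Fin n, transm (KD n k 1) i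
      = (n:ℝ) - 1 + (if k + 1 ≤ (i:ℕ) then 1 else 0) := by
    intro i
    have h := hsum1 (fun _ => (1:ℝ)) i
    simp only [mul_one] at h
    rw [transm, h, hones]
  have htr2 : ∀ i : Fin n, transm (KD n k (n - k - 1)) i
      = (n:ℝ) - 1 + (if (i:ℕ) = n - 1 then (n:ℝ) - 1 - (k:ℝ) else 0) := by
    intro i
    have h := hsum2 (fun _ => (1:ℝ)) i
    simp only [mul_one] at h
    rw [transm, h, hones]
    congr 1
    split_ifs with hc
    · rw [sum_ind (1:ℝ)]
      have e2 : min (n-1) n - k = n - (k+1) := by omega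
      rw [e2, Nat.cast_sub (by omega)]
      push_cast; ring
    · rfl
  have hS1 : ∑ j, x1 j = ((k:ℝ) + 1) * ((1-α)*((n:ℝ)-(k:ℝ)-1)) + ((n:ℝ) - (k:ℝ) - 1) * (ρ1 - (α*((n:ℝ)-1)+(1-α)*(k:ℝ))) := by
    rw [hx1def]
    rw [sum_split (by omega : k + 1 ≤ n)]
    have e2 : n - (k + 1) = n - (k+1) := rfl
    rw [Nat.cast_sub (by omega)]
    push_cast; ring
  have hS2 : ∑ j, x2 j = ((n:ℝ) - 1) * (1 - α) + (ρ2 - (α*((n:ℝ)-1)+(1-α)*((n:ℝ)-2))) := by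
    rw [hx2def]
    rw [sum_split (by omega : n - 1 ≤ n)]
    have e : n - (n - 1) = 1 := by omega
    rw [e, Nat.cast_sub (by omega : 1 ≤ n)]
    push_cast; ring
  have hrow1 : ∀ i, (Dalpha α (KD n k 1)).mulVec x1 i = ρ1 * x1 i := by
    intro i
    rw [dalpha_mulVec, htr1 i, hsum1 x1 i, hS1]
    have hkfv : x1 kf = ((1-α)*((n:ℝ)-(k:ℝ)-1)) := by
      rw [hx1def]; dsimp only; rw [if_pos (show (kf:ℕ) < k + 1 by simp [hkf])]
    by_cases hi : (i:ℕ) < k + 1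
    · have hx1i : x1 i = ((1-α)*((n:ℝ)-(k:ℝ)-1)) := by rw [hx1def]; dsimp only; rw [if_pos hi]
      rw [if_neg (by omega), if_neg (by omega), hx1i]
      ring
    · have hx1i : x1 i = ρ1 - (α*((n:ℝ)-1)+(1-α)*(k:ℝ)) := by rw [hx1def]; dsimp only; rw [if_neg hi]
      rw [if_pos (by omega), if_pos (by omega), hx1i, hkfv]
      linear_combination (-1 : ℝ) * hq1
  have hrow2 : ∀ i, (Dalpha α (KD n k (n - k - 1))).mulVec x2 i = ρ2 * x2 i := by
    intro i
    rw [dalpha_mulVec, htr2 i, hsum2 x2 i, hS2]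
    by_cases hi : (i:ℕ) < n - 1
    · have hx2i : x2 i = 1 - α := by rw [hx2def]; dsimp only; rw [if_pos hi]
      rw [if_neg (by omega), if_neg (by omega), hx2i]
      ring
    · have hieq : (i:ℕ) = n - 1 := by have := i.isLt; omega
      have hx2i : x2 i = ρ2 - (α*((n:ℝ)-1)+(1-α)*((n:ℝ)-2)) := by rw [hx2def]; dsimp only; rw [if_neg hi]
      have hind : (∑ j : Fin n, if k ≤ (j:ℕ) ∧ (j:ℕ) < n - 1 then x2 j else 0)
          = ((n:ℝ) - 1 - (k:ℝ)) * (1 - α) := by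
        have e : ∀ j : Fin n, (if k ≤ (j:ℕ) ∧ (j:ℕ) < n - 1 then x2 j else 0)
            = (if k ≤ (j:ℕ) ∧ (j:ℕ) < n - 1 then (1 - α) else 0) := by
          intro j
          split_ifs with hc
          · rw [hx2def]; dsimp only; rw [if_pos hc.2]
          · rfl
        rw [Finset.sum_congr rfl (fun j _ => e j), sum_ind]
        have e2 : min (n-1) n - k = n - (k+1) := by omega
        rw [e2, Nat.cast_sub (by omega)]
        push_cast; ring
      rw [if_pos hieq, if_pos hieq, hx2i, hind]
      linear_combination (-1 : ℝ) * hq2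
  have hnn1 := dalpha_nonneg (G := KD n k 1) h0.le h1.le
  have hnn2 := dalpha_nonneg (G := KD n k (n - k - 1)) h0.le h1.le
  have hub1 := abs_spec_le (Dalpha α (KD n k 1)) hnn1 x1 hx1pos ρ1
    (fun i => (hrow1 i).le)
  have hub2 := abs_spec_le (Dalpha α (KD n k (n - k - 1))) hnn2 x2 hx2pos ρ2
    (fun i => (hrow2 i).le)
  have hle1 : mualpha α (KD n k 1) ≤ ρ1 := by
    rw [mualpha, specRad]
    exact Real.sSup_le hub1 hρ1pos.le
  have hge2 : ρ2 ≤ mualpha α (KD n k (n - k - 1)) := by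
    rw [mualpha, specRad]
    have hx20 : x2 ≠ 0 := by
      intro hz
      have := hx2pos ⟨0, by omega⟩
      rw [hz] at this
      simp at this
    have hmem := eigen_mem_spec (Dalpha α (KD n k (n - k - 1))) x2 hx20 ρ2
      (funext fun i => by rw [hrow2 i]; rfl)
    refine le_csSup ⟨ρ2, hub2⟩ ⟨(ρ2:ℂ), hmem, ?_⟩
    rw [Complex.norm_of_nonneg hρ2pos.le]
  linarith
end

section
/- Let 4/5 < α < 1 and integers n ≥ 2k+2, k ≥ 1. Then μ_α(K(n,k,1)) < n, and for every m with 2 ≤ m ≤ n-k-1, μ_α(K(n,k,m)) > n. Consequently μ_α(K(n,k,m)) > μ_α(K(n,k,1)) for all 2 ≤ m ≤ n-k-1. -/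
open Matrix BigOperators

/- ============ auxiliary lemmas ============ -/

lemma spec_iff_vec {N : ℕ} (A : Matrix (Fin N) (Fin N) ℂ) (μ : ℂ) :
    μ ∈ spectrum ℂ A ↔ ∃ v : Fin N → ℂ, v ≠ 0 ∧ A.mulVec v = μ • v := by
  rw [spectrum.mem_iff, Algebra.algebraMap_eq_smul_one,
    Matrix.isUnit_iff_isUnit_det, isUnit_iff_ne_zero, not_ne_iff,
    ← Matrix.exists_mulVec_eq_zero_iff]
  constructor
  · rintro ⟨v, hv, h⟩
    refine ⟨v, hv, ?_⟩
    rw [Matrix.sub_mulVec, Matrix.smul_mulVec, Matrix.one_mulVec, sub_eq_zero] at h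
    exact h.symm
  · rintro ⟨v, hv, h⟩
    refine ⟨v, hv, ?_⟩
    rw [Matrix.sub_mulVec, Matrix.smul_mulVec, Matrix.one_mulVec, h, sub_self]

/-- weighted row-sum bound on moduli of eigenvalues of a nonnegative real matrix -/
lemma eig_bound {N : ℕ} (A : Matrix (Fin N) (Fin N) ℝ)
    (hA : ∀ i j, 0 ≤ A i j) (x : Fin N → ℝ) (hx : ∀ i, 0 < x i) (c : ℝ)
    (hrow : ∀ i, ∑ j, A i j * x j ≤ c * x i)
    (μ : ℂ) (hμ : μ ∈ spectrum ℂ (A.map (fun t => (t:ℂ)))) :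
    ‖μ‖ ≤ c := by
  obtain ⟨v, hv, hAv⟩ := (spec_iff_vec _ μ).mp hμ
  obtain ⟨j₁, hj₁⟩ := Function.ne_iff.mp hv
  have hj₁' : v j₁ ≠ 0 := by simpa using hj₁
  obtain ⟨i₀, -, hmax⟩ := Finset.exists_max_image Finset.univ
    (fun i => ‖v i‖ / x i) ⟨j₁, Finset.mem_univ j₁⟩
  set s : ℝ := ‖v i₀‖ / x i₀ with hs
  have hbound : ∀ j, ‖v j‖ ≤ s * x j := by
    intro j
    have h := hmax j (Finset.mem_univ j)
    rw [div_le_iff₀ (hx j)] at h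
    linarith
  have hspos : 0 < s := by
    have h1 : 0 < ‖v j₁‖ := norm_pos_iff.mpr hj₁'
    have h2 : ‖v j₁‖ / x j₁ ≤ s := hmax j₁ (Finset.mem_univ j₁)
    have := div_pos h1 (hx j₁)
    linarith
  have hvi₀ : ‖v i₀‖ = s * x i₀ := by
    rw [hs, div_mul_cancel₀ _ (hx i₀).ne']
  have hrowi : ∑ j, ((A i₀ j : ℂ) * v j) = μ * v i₀ := by
    have := congrFun hAv i₀
    simpa [Matrix.mulVec, dotProduct, Matrix.map_apply] using this
  have hLHS : ‖μ‖ * (s * x i₀) ≤ c * (s * x i₀) := by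
    have h1 : ‖μ * v i₀‖ = ‖μ‖ * (s * x i₀) := by
      rw [norm_mul, hvi₀]
    rw [← h1, ← hrowi]
    have h2 : ‖∑ j, ((A i₀ j : ℂ) * v j)‖
        ≤ ∑ j, A i₀ j * ‖v j‖ := by
      refine le_trans (norm_sum_le _ _) (le_of_eq ?_)
      refine Finset.sum_congr rfl fun j _ => ?_
      rw [norm_mul, Complex.norm_real, Real.norm_eq_abs, abs_of_nonneg (hA i₀ j)]
    refine h2.trans ?_
    calc ∑ j, A i₀ j * ‖v j‖
        ≤ ∑ j, A i₀ j * (s * x j) := by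
          refine Finset.sum_le_sum fun j _ => ?_
          exact mul_le_mul_of_nonneg_left (hbound j) (hA i₀ j)
      _ = s * ∑ j, A i₀ j * x j := by
          rw [Finset.mul_sum]; exact Finset.sum_congr rfl fun j _ => by ring
      _ ≤ s * (c * x i₀) := mul_le_mul_of_nonneg_left (hrow i₀) hspos.le
      _ = c * (s * x i₀) := by ring
  exact le_of_mul_le_mul_right hLHS (mul_pos hspos (hx i₀))

lemma KD_adj {n k m : ℕ} {i j : Fin n} :
    (KD n k m).Adj i j ↔ i ≠ j ∧ ¬(k + m ≤ (i : ℕ) ∧ k ≤ (j : ℕ) ∧ (j : ℕ) < k + m) :=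
  Iff.rfl

lemma ddist_eq_two_s16 {n k m : ℕ} (hk : 1 ≤ k) (hm : 1 ≤ m) (hkmn : k + m + 1 ≤ n)
    {i j : Fin n} (hi : k + m ≤ (i : ℕ)) (hj : k ≤ (j : ℕ)) (hj2 : (j : ℕ) < k + m) :
    ddist (KD n k m) i j = 2 := by
  have hij : i ≠ j := by
    intro h; rw [h] at hi; omega
  have hnpos : 0 < n := by omega
  set z : Fin n := ⟨0, hnpos⟩ with hz
  have h2 : (2 : ℕ) ∈ {l : ℕ | DWalk (KD n k m) i j l} := by
    refine ⟨fun l => match l with | 0 => i | 1 => z | _ => j, rfl, rfl, ?_⟩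
    intro l hl
    interval_cases l
    · show (KD n k m).Adj i z
      refine ⟨?_, ?_⟩
      · intro h
        have : (i : ℕ) = (z : ℕ) := by rw [h]
        simp [hz] at this; omega
      · rintro ⟨-, hkz, -⟩
        simp [hz] at hkz; omega
    · show (KD n k m).Adj z j
      refine ⟨?_, ?_⟩
      · intro h
        have : (z : ℕ) = (j : ℕ) := by rw [h]
        simp [hz] at this; omega
      · rintro ⟨hzz, -⟩
        simp [hz] at hzz; omega
  have hnot1 : ¬ DWalk (KD n k m) i j 1 := by
    rw [dwalk_one, KD_adj]
    rintro ⟨-, hcon⟩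
    exact hcon ⟨hi, hj, hj2⟩
  have hnot0 : ¬ DWalk (KD n k m) i j 0 := fun h => hij (dwalk_zero.mp h)
  have hmem := Nat.sInf_mem (⟨2, h2⟩ : Set.Nonempty {l : ℕ | DWalk (KD n k m) i j l})
  have hle := Nat.sInf_le h2
  show sInf {l : ℕ | DWalk (KD n k m) i j l} = 2
  set d := sInf {l : ℕ | DWalk (KD n k m) i j l} with hd
  rcases (by omega : d = 0 ∨ d = 1 ∨ d = 2) with h | h | h
  · rw [h] at hmem; exact absurd hmem hnot0
  · rw [h] at hmem; exact absurd hmem hnot1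
  · exact h

lemma ddist_KD {n k m : ℕ} (hk : 1 ≤ k) (hm : 1 ≤ m) (hkmn : k + m + 1 ≤ n) (i j : Fin n) :
    ((ddist (KD n k m) i j : ℕ) : ℝ) =
      if i = j then 0
      else if (k + m ≤ (i : ℕ) ∧ k ≤ (j : ℕ) ∧ (j : ℕ) < k + m) then 2 else 1 := by
  by_cases hij : i = j
  · simp [hij, ddist_self]
  · rw [if_neg hij]
    by_cases hR : k + m ≤ (i : ℕ) ∧ k ≤ (j : ℕ) ∧ (j : ℕ) < k + m
    · rw [if_pos hR, ddist_eq_two_s16 hk hm hkmn hR.1 hR.2.1 hR.2.2]; norm_num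
    · rw [if_neg hR, ddist_eq_one hij (KD_adj.mpr ⟨hij, hR⟩)]; norm_num

lemma sum_classes {N K M : ℕ} (h : K + M ≤ N) (p q s : ℝ) :
    ∑ j : Fin N, (if (j : ℕ) < K then p else if (j : ℕ) < K + M then q else s)
      = K * p + M * q + ((N : ℝ) - K - M) * s := by
  rw [Fin.sum_univ_eq_sum_range (fun l => if l < K then p else if l < K + M then q else s) N]
  rw [Finset.range_eq_Ico, ← Finset.sum_Ico_consecutive _ (Nat.zero_le (K+M)) h,
    ← Finset.sum_Ico_consecutive _ (Nat.zero_le K) (Nat.le_add_right K M)]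
  have e1 : ∑ l ∈ Finset.Ico 0 K, (if l < K then p else if l < K + M then q else s)
      = ∑ _l ∈ Finset.Ico 0 K, p :=
    Finset.sum_congr rfl (fun l hl => by
      rw [Finset.mem_Ico] at hl; rw [if_pos hl.2])
  have e2 : ∑ l ∈ Finset.Ico K (K + M), (if l < K then p else if l < K + M then q else s)
      = ∑ _l ∈ Finset.Ico K (K + M), q :=
    Finset.sum_congr rfl (fun l hl => by
      rw [Finset.mem_Ico] at hl; rw [if_neg (by omega), if_pos hl.2])
  have e3 : ∑ l ∈ Finset.Ico (K + M) N, (if l < K then p else if l < K + M then q else s)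
      = ∑ _l ∈ Finset.Ico (K + M) N, s :=
    Finset.sum_congr rfl (fun l hl => by
      rw [Finset.mem_Ico] at hl; rw [if_neg (by omega), if_neg (by omega)])
  rw [e1, e2, e3, Finset.sum_const, Finset.sum_const, Finset.sum_const,
    Nat.card_Ico, Nat.card_Ico, Nat.card_Ico, nsmul_eq_mul, nsmul_eq_mul, nsmul_eq_mul,
    Nat.cast_sub h]
  rw [Nat.sub_zero, Nat.add_sub_cancel_left]
  push_cast
  ring

lemma dist_sum {n k m : ℕ} (hk : 1 ≤ k) (hm : 1 ≤ m) (hkmn : k + m + 1 ≤ n)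
    (c1 c2 c3 : ℝ) (i : Fin n) :
    ∑ j, (ddist (KD n k m) i j : ℝ) *
        (if (j : ℕ) < k then c1 else if (j : ℕ) < k + m then c2 else c3)
    = k * c1 + m * ((if k + m ≤ (i : ℕ) then 2 else 1) * c2) + ((n : ℝ) - k - m) * c3
      - (if (i : ℕ) < k then c1 else if (i : ℕ) < k + m then c2 else c3) := by
  set F : Fin n → ℝ := fun j => if (j : ℕ) < k then c1
    else if (j : ℕ) < k + m then ((if k + m ≤ (i : ℕ) then 2 else 1) * c2) else c3 with hF
  have key : ∀ j, (ddist (KD n k m) i j : ℝ) *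
      (if (j : ℕ) < k then c1 else if (j : ℕ) < k + m then c2 else c3)
      = F j - (if i = j then F j else 0) := by
    intro j
    rw [ddist_KD hk hm hkmn]
    by_cases hij : i = j
    · rw [if_pos hij, if_pos hij]; ring
    · rw [if_neg hij, if_neg hij, sub_zero]
      simp only [hF]
      by_cases h1 : (j : ℕ) < k
      · rw [if_pos h1, if_pos h1, if_neg (by omega)]; ring
      · rw [if_neg h1]
        by_cases h2 : (j : ℕ) < k + m
        · rw [if_pos h2, if_neg h1, if_pos h2]
          by_cases h3 : k + m ≤ (i : ℕ)
          · rw [if_pos ⟨h3, by omega, h2⟩, if_pos h3]; try ring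
          · rw [if_neg (by tauto), if_neg h3]; try ring
        · rw [if_neg h2, if_neg h1, if_neg h2, if_neg (by omega)]; ring
  rw [Finset.sum_congr rfl (fun j _ => key j), Finset.sum_sub_distrib]
  have hFi : (∑ j, (if i = j then F j else 0)) = F i := by
    simp
  have hFsum : ∑ j, F j = k * c1 + m * ((if k + m ≤ (i : ℕ) then 2 else 1) * c2)
      + ((n : ℝ) - k - m) * c3 := by
    rw [hF, sum_classes (by omega)]
  have hFi' : F i = (if (i : ℕ) < k then c1 else if (i : ℕ) < k + m then c2 else c3) := by
    simp only [hF]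
    by_cases h1 : (i : ℕ) < k
    · rw [if_pos h1, if_pos h1]
    · rw [if_neg h1, if_neg h1]
      by_cases h2 : (i : ℕ) < k + m
      · rw [if_pos h2, if_pos h2, if_neg (by omega)]; ring
      · rw [if_neg h2, if_neg h2]
  rw [hFi, hFsum, hFi']

lemma transm_KD {n k m : ℕ} (hk : 1 ≤ k) (hm : 1 ≤ m) (hkmn : k + m + 1 ≤ n) (i : Fin n) :
    transm (KD n k m) i
      = if k + m ≤ (i : ℕ) then ((n : ℝ) - 1 + m) else ((n : ℝ) - 1) := by
  have h := dist_sum hk hm hkmn 1 1 1 i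
  have h2 : transm (KD n k m) i = ∑ j, (ddist (KD n k m) i j : ℝ) *
      (if (j : ℕ) < k then (1:ℝ) else if (j : ℕ) < k + m then 1 else 1) := by
    unfold transm
    exact Finset.sum_congr rfl fun j _ => by
      by_cases h1 : (j:ℕ) < k <;> by_cases h2 : (j:ℕ) < k + m <;> simp [h1, h2]
  rw [h2, h]
  have : (if (i : ℕ) < k then (1:ℝ) else if (i : ℕ) < k + m then 1 else 1) = 1 := by
    by_cases h1 : (i:ℕ) < k <;> by_cases h2 : (i:ℕ) < k + m <;> simp [h1, h2]
  rw [this]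
  by_cases h3 : k + m ≤ (i : ℕ)
  · rw [if_pos h3, if_pos h3]; ring
  · rw [if_neg h3, if_neg h3]; ring

lemma Dalpha_mulVec {n : ℕ} (α : ℝ) (G : Digraph (Fin n)) (v : Fin n → ℝ) (i : Fin n) :
    (Dalpha α G).mulVec v i
      = α * (transm G i * v i) + (1 - α) * ∑ j, (ddist G i j : ℝ) * v j := by
  unfold Dalpha
  rw [Matrix.add_mulVec, Matrix.smul_mulVec, Matrix.smul_mulVec]
  simp only [Pi.add_apply, Pi.smul_apply, smul_eq_mul, Matrix.mulVec_diagonal]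
  simp [Matrix.mulVec, dotProduct]

lemma Dalpha_nonneg {n : ℕ} {α : ℝ} (hα0 : 0 ≤ α) (hα1 : α ≤ 1) (G : Digraph (Fin n)) :
    ∀ i j, 0 ≤ Dalpha α G i j := by
  intro i j
  unfold Dalpha
  simp only [Matrix.add_apply, Matrix.smul_apply, Matrix.of_apply, smul_eq_mul]
  have ht : 0 ≤ transm G i := Finset.sum_nonneg fun j _ => Nat.cast_nonneg _
  have hd : (0:ℝ) ≤ (ddist G i j : ℝ) := Nat.cast_nonneg _
  have h1 : (0:ℝ) ≤ 1 - α := by linarith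
  by_cases hij : i = j
  · subst hij
    rw [Matrix.diagonal_apply_eq]
    exact add_nonneg (mul_nonneg hα0 ht) (mul_nonneg h1 hd)
  · rw [Matrix.diagonal_apply_ne _ hij, mul_zero, zero_add]
    exact mul_nonneg h1 hd

lemma rowsum_eq_mulVec {N : ℕ} (A : Matrix (Fin N) (Fin N) ℝ) (x : Fin N → ℝ) (i : Fin N) :
    ∑ j, A i j * x j = A.mulVec x i := rfl
section Part1

lemma mualpha_lt {n k : ℕ} (hk : 1 ≤ k) (hn : 2 * k + 2 ≤ n)
    {α : ℝ} (h0 : 4 / 5 < α) (h1 : α < 1) :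
    mualpha α (KD n k 1) < n := by
  have hkmn : k + 1 + 1 ≤ n := by omega
  have hn4 : (4:ℝ) ≤ (n:ℝ) := by exact_mod_cast (by omega : 4 ≤ n)
  have hnpos : (0:ℝ) < n := by linarith
  have hnne : (n:ℝ) ≠ 0 := hnpos.ne'
  set A := Dalpha α (KD n k 1) with hA
  have hApos : ∀ i j, 0 ≤ A i j := Dalpha_nonneg (by linarith) (by linarith) _
  set x : Fin n → ℝ := fun i => if (i : ℕ) < k + 1 then 1 else 1 + 1/(n:ℝ) with hxdef
  have hx : ∀ i, 0 < x i := by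
    intro i
    simp only [hxdef]
    by_cases h : (i:ℕ) < k + 1
    · rw [if_pos h]; norm_num
    · rw [if_neg h]; positivity
  have hK : (1:ℝ) ≤ (k:ℝ) := by exact_mod_cast hk
  have hNK : 2*(k:ℝ) + 2 ≤ (n:ℝ) := by exact_mod_cast hn
  -- row sums are strictly below n * x i
  have hrow : ∀ i, ∑ j, A i j * x j < (n:ℝ) * x i := by
    intro i
    rw [rowsum_eq_mulVec, hA, Dalpha_mulVec, transm_KD hk le_rfl hkmn]
    have hxclass : ∀ j : Fin n, x j =
        (if (j : ℕ) < k then (1:ℝ) else if (j : ℕ) < k + 1 then 1 else 1 + 1/(n:ℝ)) := by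
      intro j
      by_cases hj1 : (j:ℕ) < k
      · simp only [hxdef]; simp [hj1, (by omega : (j:ℕ) < k + 1)]
      · by_cases hj2 : (j:ℕ) < k + 1
        · simp only [hxdef]; simp [hj1, hj2]
        · simp only [hxdef]; simp [hj1, hj2]
    rw [Finset.sum_congr rfl (fun j _ => by rw [hxclass j]),
      dist_sum hk le_rfl hkmn 1 1 (1 + 1/(n:ℝ)) i]
    have hxi := hxclass i
    by_cases hc2 : (i:ℕ) < k + 1
    · rw [if_neg (by omega), if_neg (by omega)]
      rw [show x i = 1 by
        rw [hxi]
        by_cases hc1 : (i:ℕ) < k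
        · rw [if_pos hc1]
        · rw [if_neg hc1, if_pos hc2]]
      rw [show (if (i:ℕ) < k then (1:ℝ) else if (i:ℕ) < k + 1 then 1 else 1 + 1/(n:ℝ)) = 1 by
        by_cases hc1 : (i:ℕ) < k
        · rw [if_pos hc1]
        · rw [if_neg hc1, if_pos hc2]]
      push_cast
      have hmul := mul_lt_mul_of_pos_right (show (1:ℝ) - α < 1 by linarith)
        (show (0:ℝ) < (n:ℝ) - k - 1 by linarith)
      have h5 : (0:ℝ) < 1 - α := by linarith
      rw [div_eq_mul_inv]
      have hinv : (n:ℝ) * ((n:ℝ))⁻¹ = 1 := mul_inv_cancel₀ hnne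
      have hinvpos : (0:ℝ) < ((n:ℝ))⁻¹ := by positivity
      nlinarith [mul_lt_mul_of_pos_right hmul hinvpos, mul_pos (mul_pos h5 (show (0:ℝ) < (k:ℝ)+1 by linarith)) hinvpos]
    · rw [if_pos (by omega), if_pos (by omega)]
      rw [show x i = 1 + 1/(n:ℝ) by rw [hxi, if_neg (by omega), if_neg hc2]]
      rw [show (if (i:ℕ) < k then (1:ℝ) else if (i:ℕ) < k + 1 then 1 else 1 + 1/(n:ℝ))
          = 1 + 1/(n:ℝ) by rw [if_neg (by omega), if_neg hc2]]
      push_cast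
      rw [div_eq_mul_inv]
      have hinv : (n:ℝ) * ((n:ℝ))⁻¹ = 1 := mul_inv_cancel₀ hnne
      have hinvpos : (0:ℝ) < ((n:ℝ))⁻¹ := by positivity
      have h5 : (0:ℝ) < 1 - α := by linarith
      nlinarith [mul_pos (mul_pos h5 (show (0:ℝ) < (k:ℝ)+2 by linarith)) hinvpos]
  -- take the max of the weighted row sums
  have hne : (Finset.univ : Finset (Fin n)).Nonempty := ⟨⟨0, by omega⟩, Finset.mem_univ _⟩
  set c := Finset.sup' Finset.univ hne (fun i => (∑ j, A i j * x j) / x i) with hc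
  have hclt : c < n := by
    rw [hc, Finset.sup'_lt_iff]
    intro i _
    rw [div_lt_iff₀ (hx i)]
    exact hrow i
  have hcrow : ∀ i, ∑ j, A i j * x j ≤ c * x i := by
    intro i
    have h2 := Finset.le_sup' (fun i => (∑ j, A i j * x j) / x i) (Finset.mem_univ i)
    rw [div_le_iff₀ (hx i)] at h2
    exact h2
  have hc0 : 0 ≤ c := by
    have h1' := Finset.le_sup' (fun i => (∑ j, A i j * x j) / x i)
      (Finset.mem_univ (⟨0, by omega⟩ : Fin n))
    refine le_trans ?_ h1'
    have h2 : 0 ≤ ∑ j, A (⟨0, by omega⟩ : Fin n) j * x j :=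
      Finset.sum_nonneg fun j _ => mul_nonneg (hApos _ j) (hx j).le
    positivity
  unfold mualpha specRad
  refine lt_of_le_of_lt (Real.sSup_le ?_ hc0) hclt
  rintro r ⟨μ, hμ, rfl⟩
  exact eig_bound A hApos x hx c hcrow μ hμ

end Part1
section Part2

lemma gn_neg {α NR K M : ℝ} (hK : 1 ≤ K) (hM : 2 ≤ M) (hNK : 2*K+2 ≤ NR)
    (hMN : M ≤ NR - K - 1) (h0 : 4/5 < α) (h1 : α < 1) :
    NR^2 - (α*NR + α*M + NR - 2)*NR
      + (1 - NR - M*NR - α*K*M + 2*α*NR*M - α*NR + α*NR^2 - α*M - α*M^2 + K*M + M^2) < 0 := by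
  nlinarith [mul_nonneg (mul_nonneg (by linarith : (0:ℝ) ≤ 1-α) (by linarith : (0:ℝ) ≤ M-2))
      (by linarith : (0:ℝ) ≤ NR-K-1-M),
    mul_nonneg (by linarith : (0:ℝ) ≤ 1-α) (by linarith : (0:ℝ) ≤ NR-2*K-2),
    mul_nonneg (by linarith : (0:ℝ) ≤ 2*α-1) (by linarith : (0:ℝ) ≤ M-2)]

set_option maxHeartbeats 2000000 in
lemma mualpha_gt {n k m : ℕ} (hk : 1 ≤ k) (hn : 2 * k + 2 ≤ n) (hm : 2 ≤ m)
    (hmn : k + m + 1 ≤ n) {α : ℝ} (h0 : 4 / 5 < α) (h1 : α < 1) :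
    (n:ℝ) < mualpha α (KD n k m) := by
  have hm1 : 1 ≤ m := by omega
  have hK : (1:ℝ) ≤ (k:ℝ) := by exact_mod_cast hk
  have hM : (2:ℝ) ≤ (m:ℝ) := by exact_mod_cast hm
  have hNK : 2*(k:ℝ)+2 ≤ (n:ℝ) := by exact_mod_cast hn
  have hMN : (m:ℝ) ≤ (n:ℝ) - k - 1 := by
    have : (k:ℝ) + m + 1 ≤ (n:ℝ) := by exact_mod_cast hmn
    linarith
  have hnpos : (0:ℝ) < n := by linarith
  set B : ℝ := α*(n:ℝ) + α*(m:ℝ) + (n:ℝ) - 2 with hB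
  set C : ℝ := 1 - (n:ℝ) - (m:ℝ)*(n:ℝ) - α*(k:ℝ)*(m:ℝ) + 2*α*(n:ℝ)*(m:ℝ) - α*(n:ℝ)
    + α*(n:ℝ)^2 - α*(m:ℝ) - α*(m:ℝ)^2 + (k:ℝ)*(m:ℝ) + (m:ℝ)^2 with hC
  have hgn : (n:ℝ)^2 - B*(n:ℝ) + C < 0 := by
    rw [hB, hC]; exact gn_neg hK hM hNK hMN h0 h1
  set disc : ℝ := B^2 - 4*C with hD
  have hdisc : (2*(n:ℝ) - B)^2 < disc := by rw [hD]; nlinarith [hgn]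
  have hdisc0 : 0 ≤ disc := le_trans (sq_nonneg _) hdisc.le
  set s : ℝ := Real.sqrt disc with hs
  have hsq : s^2 = disc := Real.sq_sqrt hdisc0
  have habs : |2*(n:ℝ) - B| < s := by
    have h2 := Real.sqrt_lt_sqrt (sq_nonneg (2*(n:ℝ) - B)) hdisc
    rwa [Real.sqrt_sq_eq_abs, ← hs] at h2
  set lam : ℝ := (B + s)/2 with hlam
  have hlamgt : (n:ℝ) < lam := by
    have h2 := le_abs_self (2*(n:ℝ) - B)
    rw [hlam]; linarith
  have hglam : lam^2 - B*lam + C = 0 := by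
    have h2 : lam^2 - B*lam + C = (s^2 - (B^2 - 4*C))/4 := by rw [hlam]; ring
    rw [h2, hsq, hD]; ring
  have hglam2 : lam^2 - (α*(n:ℝ) + α*(m:ℝ) + (n:ℝ) - 2)*lam
      + (1 - (n:ℝ) - (m:ℝ)*(n:ℝ) - α*(k:ℝ)*(m:ℝ) + 2*α*(n:ℝ)*(m:ℝ) - α*(n:ℝ)
        + α*(n:ℝ)^2 - α*(m:ℝ) - α*(m:ℝ)^2 + (k:ℝ)*(m:ℝ) + (m:ℝ)^2) = 0 := by
    have h2 := hglam; rw [hB, hC] at h2; exact h2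
  set Q : Matrix (Fin 3) (Fin 3) ℝ :=
    !![α*((n:ℝ)-1) + (1-α)*((k:ℝ)-1), (1-α)*(m:ℝ), (1-α)*((n:ℝ)-(k:ℝ)-(m:ℝ));
       (1-α)*(k:ℝ), α*((n:ℝ)-1) + (1-α)*((m:ℝ)-1), (1-α)*((n:ℝ)-(k:ℝ)-(m:ℝ));
       (1-α)*(k:ℝ), 2*((1-α)*(m:ℝ)), α*((n:ℝ)-1+(m:ℝ)) + (1-α)*((n:ℝ)-(k:ℝ)-(m:ℝ)-1)] with hQ
  have hM : lam • (1 : Matrix (Fin 3) (Fin 3) ℝ) - Q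
      = !![lam - (α*((n:ℝ)-1) + (1-α)*((k:ℝ)-1)), -((1-α)*(m:ℝ)), -((1-α)*((n:ℝ)-(k:ℝ)-(m:ℝ)));
           -((1-α)*(k:ℝ)), lam - (α*((n:ℝ)-1) + (1-α)*((m:ℝ)-1)), -((1-α)*((n:ℝ)-(k:ℝ)-(m:ℝ)));
           -((1-α)*(k:ℝ)), -(2*((1-α)*(m:ℝ))), lam - (α*((n:ℝ)-1+(m:ℝ)) + (1-α)*((n:ℝ)-(k:ℝ)-(m:ℝ)-1))] := by
    rw [hQ]
    ext x y
    fin_cases x <;> fin_cases y <;>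
      simp [Matrix.smul_apply, Matrix.one_apply, Matrix.vecHead, Matrix.vecTail] <;> ring
  have hdet : (lam • (1 : Matrix (Fin 3) (Fin 3) ℝ) - Q).det = 0 := by
    rw [hM, Matrix.det_fin_three]
    simp [Matrix.vecHead, Matrix.vecTail]
    linear_combination (lam - (α*(n:ℝ) - 1)) * hglam2
  obtain ⟨w, hw0, hww⟩ := Matrix.exists_mulVec_eq_zero_iff.mpr hdet
  have hQw : Q.mulVec w = lam • w := by
    rw [Matrix.sub_mulVec, Matrix.smul_mulVec, Matrix.one_mulVec, sub_eq_zero] at hww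
    exact hww.symm
  have hr0 : (α*((n:ℝ)-1) + (1-α)*((k:ℝ)-1)) * w 0 + (1-α)*(m:ℝ) * w 1
      + (1-α)*((n:ℝ)-(k:ℝ)-(m:ℝ)) * w 2 = lam * w 0 := by
    have h2 := congrFun hQw 0
    simpa [Matrix.mulVec, dotProduct, Fin.sum_univ_three, hQ, Matrix.vecHead, Matrix.vecTail] using h2
  have hr1 : (1-α)*(k:ℝ) * w 0 + (α*((n:ℝ)-1) + (1-α)*((m:ℝ)-1)) * w 1
      + (1-α)*((n:ℝ)-(k:ℝ)-(m:ℝ)) * w 2 = lam * w 1 := by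
    have h2 := congrFun hQw 1
    simpa [Matrix.mulVec, dotProduct, Fin.sum_univ_three, hQ, Matrix.vecHead, Matrix.vecTail] using h2
  have hr2 : (1-α)*(k:ℝ) * w 0 + 2*((1-α)*(m:ℝ)) * w 1
      + (α*((n:ℝ)-1+(m:ℝ)) + (1-α)*((n:ℝ)-(k:ℝ)-(m:ℝ)-1)) * w 2 = lam * w 2 := by
    have h2 := congrFun hQw 2
    simpa [Matrix.mulVec, dotProduct, Fin.sum_univ_three, hQ, Matrix.vecHead, Matrix.vecTail] using h2
  set v : Fin n → ℝ := fun j => if (j:ℕ) < k then w 0 else if (j:ℕ) < k + m then w 1 else w 2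
    with hv
  have heig : ∀ i, (Dalpha α (KD n k m)).mulVec v i = lam * v i := by
    intro i
    rw [Dalpha_mulVec, transm_KD hk hm1 hmn]
    simp only [hv]
    rw [dist_sum hk hm1 hmn (w 0) (w 1) (w 2) i]
    by_cases hc1 : (i:ℕ) < k
    · rw [if_neg (show ¬ (k + m ≤ (i:ℕ)) by omega), if_neg (show ¬ (k + m ≤ (i:ℕ)) by omega),
        if_pos hc1]
      linear_combination hr0
    · by_cases hc2 : (i:ℕ) < k + m
      · rw [if_neg (show ¬ (k + m ≤ (i:ℕ)) by omega), if_neg (show ¬ (k + m ≤ (i:ℕ)) by omega),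
          if_neg hc1, if_pos hc2]
        linear_combination hr1
      · rw [if_pos (show (k + m ≤ (i:ℕ)) by omega), if_pos (show (k + m ≤ (i:ℕ)) by omega),
          if_neg hc1, if_neg hc2]
        linear_combination hr2
  have hvne : v ≠ 0 := by
    intro hcon
    apply hw0
    have e0 : w 0 = 0 := by
      have := congrFun hcon (⟨0, by omega⟩ : Fin n)
      simpa [hv, (by omega : (0:ℕ) < k)] using this
    have e1 : w 1 = 0 := by
      have := congrFun hcon (⟨k, by omega⟩ : Fin n)
      simpa [hv, (by omega : ¬ (k < k)), (by omega : k < k + m)] using this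
    have e2 : w 2 = 0 := by
      have := congrFun hcon (⟨k + m, by omega⟩ : Fin n)
      simpa [hv, (by omega : ¬ (k + m < k)), (by omega : ¬ (k + m < k + m))] using this
    funext t
    fin_cases t
    · exact e0
    · exact e1
    · exact e2
  -- lift to the complex spectrum
  set A := Dalpha α (KD n k m) with hA
  set Ac := A.map (fun t => (t:ℂ)) with hAc
  have hspec : (lam:ℂ) ∈ spectrum ℂ Ac := by
    rw [spec_iff_vec]
    refine ⟨fun t => ((v t : ℝ) : ℂ), ?_, ?_⟩
    · obtain ⟨j, hj⟩ := Function.ne_iff.mp hvne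
      refine Function.ne_iff.mpr ⟨j, ?_⟩
      simpa using hj
    · funext i
      have h2 : Ac.mulVec (fun t => ((v t : ℝ) : ℂ)) i = ((A.mulVec v i : ℝ) : ℂ) := by
        simp only [hAc, Matrix.mulVec, dotProduct, Matrix.map_apply]
        push_cast
        rfl
      rw [h2, heig i]
      push_cast
      rfl
  -- upper bound on all eigenvalue moduli (boundedness of the spectrum set)
  have hApos : ∀ i j, 0 ≤ A i j := Dalpha_nonneg (by linarith) (by linarith) _
  have hb : ∀ i, ∑ j, A i j * (fun (_ : Fin n) => (1:ℝ)) j ≤ (2*(n:ℝ)) * (fun (_ : Fin n) => (1:ℝ)) i := by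
    intro i
    simp only
    rw [rowsum_eq_mulVec, hA, Dalpha_mulVec, transm_KD hk hm1 hmn]
    have h3 : ∑ j, (ddist (KD n k m) i j : ℝ) * 1 = transm (KD n k m) i := by
      unfold transm
      exact Finset.sum_congr rfl fun j _ => mul_one _
    rw [h3, transm_KD hk hm1 hmn]
    have hMn : (m:ℝ) ≤ (n:ℝ) := by linarith
    by_cases h4 : k + m ≤ (i:ℕ)
    · rw [if_pos h4]; nlinarith [hMn]
    · rw [if_neg h4]; nlinarith [hMn]
  have hbdd : BddAbove {r : ℝ | ∃ μ ∈ spectrum ℂ Ac, r = ‖μ‖} := by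
    refine ⟨2*(n:ℝ), ?_⟩
    rintro ρ ⟨μ, hμ, rfl⟩
    exact eig_bound A hApos (fun _ => 1) (fun _ => one_pos) (2*(n:ℝ)) hb μ hμ
  have hmem : lam ∈ {r : ℝ | ∃ μ ∈ spectrum ℂ Ac, r = ‖μ‖} := by
    refine ⟨(lam:ℂ), hspec, ?_⟩
    rw [Complex.norm_real, Real.norm_eq_abs, abs_of_pos (by linarith : (0:ℝ) < lam)]
  have hfin : lam ≤ mualpha α (KD n k m) := le_csSup hbdd hmem
  linarith

end Part2

theorem stmt16 {n k : ℕ} (hk : 1 ≤ k) (hn : 2 * k + 2 ≤ n)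
    (α : ℝ) (h0 : 4 / 5 < α) (h1 : α < 1) :
    mualpha α (KD n k 1) < n ∧
    ∀ m : ℕ, 2 ≤ m → m ≤ n - k - 1 →
      (n : ℝ) < mualpha α (KD n k m) ∧ mualpha α (KD n k 1) < mualpha α (KD n k m) := by
  refine ⟨mualpha_lt hk hn h0 h1, ?_⟩
  intro m hm2 hmle
  have hmn : k + m + 1 ≤ n := by omega
  have h2 := mualpha_gt hk hn hm2 hmn h0 h1
  exact ⟨h2, lt_trans (mualpha_lt hk hn h0 h1) h2⟩
end
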